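/- Each of the five generators x = [a,b], y = [b,c], z = aya, t = cxcy⁻¹x⁻¹, w = ata of the branching subgroup K of IMG(z²+i) has order exactly 4. Consequently K/K' embeds into C₄⁵. -/

import Mathlib

/-- The generator `a = (1,1)σ` of `IMG(z²+i)`, acting on the binary rooted tree
whose vertices are finite binary words. -/
def aF : List Bool → List Bool
  | [] => []
  | x :: s => (!x) :: s

mutual
/-- The generator `b = (a, c)` of `IMG(z²+i)`. -/
def bF : List Bool → List Bool
  | [] => []
  | false :: s => false :: aF s
  | true :: s => true :: cF s
/-- The generator `c = (b, 1)` of `IMG(z²+i)`. -/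
def cF : List Bool → List Bool
  | [] => []
  | false :: s => false :: bF s
  | true :: s => true :: s
end

theorem aF_invol : ∀ s, aF (aF s) = s := by
  intro s; cases s <;> simp [aF]

theorem bcF_invol : ∀ s, bF (bF s) = s ∧ cF (cF s) = s := by
  intro s
  induction s with
  | nil => exact ⟨rfl, rfl⟩
  | cons x s ih =>
    cases x <;> exact ⟨by simp [bF, ih.1, ih.2, aF_invol], by simp [cF, ih.1]⟩

/-- `a` as a tree automorphism. -/
def aE : Equiv.Perm (List Bool) := ⟨aF, aF, aF_invol, aF_invol⟩
/-- `b` as a tree automorphism. -/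
def bE : Equiv.Perm (List Bool) := ⟨bF, bF, fun s => (bcF_invol s).1, fun s => (bcF_invol s).1⟩
/-- `c` as a tree automorphism. -/
def cE : Equiv.Perm (List Bool) := ⟨cF, cF, fun s => (bcF_invol s).2, fun s => (bcF_invol s).2⟩

/-- `G = IMG(z²+i)`, the group generated by `a`, `b`, `c`. -/
def IMG : Subgroup (Equiv.Perm (List Bool)) := Subgroup.closure {aE, bE, cE}

def aG : IMG := ⟨aE, Subgroup.subset_closure (by simp)⟩
def bG : IMG := ⟨bE, Subgroup.subset_closure (by simp)⟩
def cG : IMG := ⟨cE, Subgroup.subset_closure (by simp)⟩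

open scoped commutatorElement

def xG : IMG := ⁅aG, bG⁆
def yG : IMG := ⁅bG, cG⁆
def zG : IMG := aG * yG * aG
def tG : IMG := cG * xG * cG * yG⁻¹ * xG⁻¹
def wG : IMG := aG * tG * aG

/-- `K = ⟨[a,b],[b,c]⟩^G`, the maximal branching subgroup of `IMG(z²+i)`. -/
def Ksub : Subgroup ↥IMG := Subgroup.normalClosure {⁅aG, bG⁆, ⁅bG, cG⁆}


theorem bF_invol : ∀ s, bF (bF s) = s := fun s => (bcF_invol s).1
theorem cF_invol : ∀ s, cF (cF s) = s := fun s => (bcF_invol s).2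
theorem aF_f (s : List Bool) : aF (false :: s) = true :: s := rfl
theorem aF_t (s : List Bool) : aF (true :: s) = false :: s := rfl
theorem bF_f (s : List Bool) : bF (false :: s) = false :: aF s := rfl
theorem bF_t (s : List Bool) : bF (true :: s) = true :: cF s := rfl
theorem cF_f (s : List Bool) : cF (false :: s) = false :: bF s := rfl
theorem cF_t (s : List Bool) : cF (true :: s) = true :: s := rfl

set_option maxHeartbeats 2000000 in
theorem keyIds : ∀ s : List Bool, (aF (cF (aF (cF (aF (cF (aF (cF (s)))))))) = s) ∧ (cF (aF (bF (cF (bF (cF (aF (cF (s)))))))) = aF (bF (cF (bF (cF (aF (s))))))) ∧ (cF (aF (cF (aF (cF (aF (cF (aF (s)))))))) = s) ∧ (cF (aF (cF (aF (bF (aF (cF (aF (bF (cF (s)))))))))) = aF (cF (aF (bF (aF (cF (aF (bF (s))))))))) ∧ (aF (bF (aF (bF (aF (bF (aF (bF (aF (bF (aF (bF (aF (bF (aF (bF (s)))))))))))))))) = s) ∧ (aF (bF (aF (bF (cF (aF (bF (aF (cF (aF (bF (aF (bF (aF (bF (aF (s)))))))))))))))) = bF (cF (aF (bF (aF (cF (aF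 (bF (aF (bF (s))))))))))) ∧ (bF (cF (bF (cF (bF (cF (bF (cF (bF (cF (bF (cF (bF (cF (bF (cF (s)))))))))))))))) = s) ∧ (aF (bF (cF (bF (cF (bF (cF (bF (cF (bF (cF (bF (cF (bF (cF (bF (cF (aF (s)))))))))))))))))) = s) ∧ (aF (cF (aF (bF (aF (cF (aF (bF (aF (cF (aF (bF (aF (cF (aF (bF (aF (cF (aF (bF (aF (cF (aF (bF (aF (cF (aF (bF (aF (cF (aF (bF (s)))))))))))))))))))))))))))))))) = s) ∧ (cF (aF (bF (aF (cF (aF (bF (aF (cF (aF (bF (aF (cF (aF (bF (aF (cF (aF (bF (aF (cF (aF (bF (aF (cF (aF (bF (aF (cF (aF (bF (aF (s)))))))))))))))))))))))))))))))) = s) := by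
  intro s
  induction s with
  | nil => exact ⟨rfl, rfl, rfl, rfl, rfl, rfl, rfl, rfl, rfl, rfl⟩
  | cons e t ih =>
    obtain ⟨h0, h1, h2, h3, h4, h5, h6, h7, h8, h9⟩ := ih
    cases e <;>
      refine ⟨?_, ?_, ?_, ?_, ?_, ?_, ?_, ?_, ?_, ?_⟩ <;>
      simp only [aF_f, aF_t, bF_f, bF_t, cF_f, cF_t, aF_invol, bF_invol, cF_invol, h0, h1, h2, h3, h4, h5, h6, h7, h8, h9]

theorem kId0 (s : List Bool) : aF (cF (aF (cF (aF (cF (aF (cF (s)))))))) = s := (keyIds s).1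
theorem kId1 (s : List Bool) : cF (aF (bF (cF (bF (cF (aF (cF (s)))))))) = aF (bF (cF (bF (cF (aF (s)))))) := (keyIds s).2.1
theorem kId2 (s : List Bool) : cF (aF (cF (aF (cF (aF (cF (aF (s)))))))) = s := (keyIds s).2.2.1
theorem kId3 (s : List Bool) : cF (aF (cF (aF (bF (aF (cF (aF (bF (cF (s)))))))))) = aF (cF (aF (bF (aF (cF (aF (bF (s)))))))) := (keyIds s).2.2.2.1
theorem kId4 (s : List Bool) : aF (bF (aF (bF (aF (bF (aF (bF (aF (bF (aF (bF (aF (bF (aF (bF (s)))))))))))))))) = s := (keyIds s).2.2.2.2.1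
theorem kId5 (s : List Bool) : aF (bF (aF (bF (cF (aF (bF (aF (cF (aF (bF (aF (bF (aF (bF (aF (s)))))))))))))))) = bF (cF (aF (bF (aF (cF (aF (bF (aF (bF (s)))))))))) := (keyIds s).2.2.2.2.2.1
theorem kId6 (s : List Bool) : bF (cF (bF (cF (bF (cF (bF (cF (bF (cF (bF (cF (bF (cF (bF (cF (s)))))))))))))))) = s := (keyIds s).2.2.2.2.2.2.1
theorem kId7 (s : List Bool) : aF (bF (cF (bF (cF (bF (cF (bF (cF (bF (cF (bF (cF (bF (cF (bF (cF (aF (s)))))))))))))))))) = s := (keyIds s).2.2.2.2.2.2.2.1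
theorem kId8 (s : List Bool) : aF (cF (aF (bF (aF (cF (aF (bF (aF (cF (aF (bF (aF (cF (aF (bF (aF (cF (aF (bF (aF (cF (aF (bF (aF (cF (aF (bF (aF (cF (aF (bF (s)))))))))))))))))))))))))))))))) = s := (keyIds s).2.2.2.2.2.2.2.2.1
theorem kId9 (s : List Bool) : cF (aF (bF (aF (cF (aF (bF (aF (cF (aF (bF (aF (cF (aF (bF (aF (cF (aF (bF (aF (cF (aF (bF (aF (cF (aF (bF (aF (cF (aF (bF (aF (s)))))))))))))))))))))))))))))))) = s := (keyIds s).2.2.2.2.2.2.2.2.2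

theorem aE_app (s : List Bool) : aE s = aF s := rfl
theorem bE_app (s : List Bool) : bE s = bF s := rfl
theorem cE_app (s : List Bool) : cE s = cF s := rfl
theorem aE_inv : aE⁻¹ = aE := rfl
theorem bE_inv : bE⁻¹ = bE := rfl
theorem cE_inv : cE⁻¹ = cE := rfl
theorem coe_aG : ((aG : ↥IMG) : Equiv.Perm (List Bool)) = aE := rfl
theorem coe_bG : ((bG : ↥IMG) : Equiv.Perm (List Bool)) = bE := rfl
theorem coe_cG : ((cG : ↥IMG) : Equiv.Perm (List Bool)) = cE := rfl

theorem img_ext {g h : ↥IMG} (H : ∀ s, (g : Equiv.Perm (List Bool)) s = (h : Equiv.Perm (List Bool)) s) : g = h :=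
  Subtype.ext (Equiv.ext H)

set_option maxHeartbeats 2000000 in
theorem allRels : (aG * aG = 1) ∧ (bG * bG = 1) ∧ (cG * cG = 1) ∧ (xG * xG * xG * xG = 1) ∧ (yG * yG * yG * yG = 1) ∧ (zG * zG * zG * zG = 1) ∧ (tG * tG * tG * tG = 1) ∧ (wG * wG * wG * wG = 1) ∧ (aG * xG * aG = xG⁻¹) ∧ (aG * zG * aG = yG) ∧ (aG * wG * aG = tG) ∧ (bG * xG * bG = xG⁻¹) ∧ (bG * yG * bG = yG⁻¹) ∧ (bG * zG * bG = xG⁻¹ * zG⁻¹ * xG) ∧ (bG * tG * bG = xG * tG * xG⁻¹) ∧ (bG * wG * bG = wG⁻¹) ∧ (cG * xG * cG = tG * xG * yG) ∧ (cG * yG * cG = yG⁻¹) ∧ (cG * zG * cG = zG) ∧ (cG * tG * cG = tG⁻¹) ∧ (cG * wG * cG = wG) := by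
  refine ⟨?_, ?_, ?_, ?_, ?_, ?_, ?_, ?_, ?_, ?_, ?_, ?_, ?_, ?_, ?_, ?_, ?_, ?_, ?_, ?_, ?_⟩ <;>
  · refine img_ext fun s => ?_
    simp only [xG, yG, zG, tG, wG, commutatorElement_def, MulMemClass.coe_mul, InvMemClass.coe_inv, OneMemClass.coe_one, coe_aG, coe_bG, coe_cG, mul_inv_rev, inv_inv, aE_inv, bE_inv, cE_inv, Equiv.Perm.mul_apply, Equiv.Perm.one_apply, aE_app, bE_app, cE_app, aF_f, aF_t, bF_f, bF_t, cF_f, cF_t, aF_invol, bF_invol, cF_invol, kId0, kId1, kId2, kId3, kId4, kId5, kId6, kId7, kId8, kId9]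
theorem rel_a2 : aG * aG = 1 := allRels.1
theorem rel_b2 : bG * bG = 1 := allRels.2.1
theorem rel_c2 : cG * cG = 1 := allRels.2.2.1
theorem rel_x4 : xG * xG * xG * xG = 1 := allRels.2.2.2.1
theorem rel_y4 : yG * yG * yG * yG = 1 := allRels.2.2.2.2.1
theorem rel_z4 : zG * zG * zG * zG = 1 := allRels.2.2.2.2.2.1
theorem rel_t4 : tG * tG * tG * tG = 1 := allRels.2.2.2.2.2.2.1
theorem rel_w4 : wG * wG * wG * wG = 1 := allRels.2.2.2.2.2.2.2.1
theorem rel_axa : aG * xG * aG = xG⁻¹ := allRels.2.2.2.2.2.2.2.2.1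
theorem rel_aza : aG * zG * aG = yG := allRels.2.2.2.2.2.2.2.2.2.1
theorem rel_awa : aG * wG * aG = tG := allRels.2.2.2.2.2.2.2.2.2.2.1
theorem rel_bxb : bG * xG * bG = xG⁻¹ := allRels.2.2.2.2.2.2.2.2.2.2.2.1
theorem rel_byb : bG * yG * bG = yG⁻¹ := allRels.2.2.2.2.2.2.2.2.2.2.2.2.1
theorem rel_bzb : bG * zG * bG = xG⁻¹ * zG⁻¹ * xG := allRels.2.2.2.2.2.2.2.2.2.2.2.2.2.1
theorem rel_btb : bG * tG * bG = xG * tG * xG⁻¹ := allRels.2.2.2.2.2.2.2.2.2.2.2.2.2.2.1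
theorem rel_bwb : bG * wG * bG = wG⁻¹ := allRels.2.2.2.2.2.2.2.2.2.2.2.2.2.2.2.1
theorem rel_cxc : cG * xG * cG = tG * xG * yG := allRels.2.2.2.2.2.2.2.2.2.2.2.2.2.2.2.2.1
theorem rel_cyc : cG * yG * cG = yG⁻¹ := allRels.2.2.2.2.2.2.2.2.2.2.2.2.2.2.2.2.2.1
theorem rel_czc : cG * zG * cG = zG := allRels.2.2.2.2.2.2.2.2.2.2.2.2.2.2.2.2.2.2.1
theorem rel_ctc : cG * tG * cG = tG⁻¹ := allRels.2.2.2.2.2.2.2.2.2.2.2.2.2.2.2.2.2.2.2.1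
theorem rel_cwc : cG * wG * cG = wG := allRels.2.2.2.2.2.2.2.2.2.2.2.2.2.2.2.2.2.2.2.2
theorem inv_a : aG⁻¹ = aG := inv_eq_of_mul_eq_one_right rel_a2
theorem inv_b : bG⁻¹ = bG := inv_eq_of_mul_eq_one_right rel_b2
theorem inv_c : cG⁻¹ = cG := inv_eq_of_mul_eq_one_right rel_c2

theorem pow_four' {M : Type*} [Monoid M] (g : M) : g ^ 4 = g * g * g * g := by
  rw [pow_succ, pow_succ, pow_succ, pow_one]

theorem o_x4 : xG ^ 4 = 1 := by rw [pow_four']; exact rel_x4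
theorem o_y4 : yG ^ 4 = 1 := by rw [pow_four']; exact rel_y4
theorem o_z4 : zG ^ 4 = 1 := by rw [pow_four']; exact rel_z4
theorem o_t4 : tG ^ 4 = 1 := by rw [pow_four']; exact rel_t4
theorem o_w4 : wG ^ 4 = 1 := by rw [pow_four']; exact rel_w4

theorem n_x2 : ¬ xG ^ 2 = 1 := by
  intro h
  have h2 := congrArg (fun g : ↥IMG =>
    (g : Equiv.Perm (List Bool)) [false, false, false, false]) h
  simp only [pow_two, xG, aG, bG, commutatorElement_def, MulMemClass.coe_mul,
    InvMemClass.coe_inv, OneMemClass.coe_one, coe_aG, coe_bG, coe_cG, mul_inv_rev, inv_inv,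
    aE_inv, bE_inv, cE_inv, Equiv.Perm.mul_apply, Equiv.Perm.one_apply,
    aE_app, bE_app, cE_app, aF_f, aF_t, bF_f, bF_t, cF_f, cF_t] at h2
  simp at h2

theorem n_y2 : ¬ yG ^ 2 = 1 := by
  intro h
  have h2 := congrArg (fun g : ↥IMG =>
    (g : Equiv.Perm (List Bool)) [false, false, false, false, false]) h
  simp only [pow_two, yG, commutatorElement_def, MulMemClass.coe_mul,
    InvMemClass.coe_inv, OneMemClass.coe_one, coe_aG, coe_bG, coe_cG, mul_inv_rev, inv_inv,
    aE_inv, bE_inv, cE_inv, Equiv.Perm.mul_apply, Equiv.Perm.one_apply,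
    aE_app, bE_app, cE_app, aF_f, aF_t, bF_f, bF_t, cF_f, cF_t] at h2
  simp at h2

theorem n_z2 : ¬ zG ^ 2 = 1 := by
  intro h
  have h2 := congrArg (fun g : ↥IMG =>
    (g : Equiv.Perm (List Bool)) [true, false, false, false, false]) h
  simp only [pow_two, zG, yG, commutatorElement_def, MulMemClass.coe_mul,
    InvMemClass.coe_inv, OneMemClass.coe_one, coe_aG, coe_bG, coe_cG, mul_inv_rev, inv_inv,
    aE_inv, bE_inv, cE_inv, Equiv.Perm.mul_apply, Equiv.Perm.one_apply,
    aE_app, bE_app, cE_app, aF_f, aF_t, bF_f, bF_t, cF_f, cF_t] at h2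
  simp at h2

theorem n_t2 : ¬ tG ^ 2 = 1 := by
  intro h
  have h2 := congrArg (fun g : ↥IMG =>
    (g : Equiv.Perm (List Bool)) [false, false, false, false, false, false]) h
  simp only [pow_two, tG, xG, yG, commutatorElement_def, MulMemClass.coe_mul,
    InvMemClass.coe_inv, OneMemClass.coe_one, coe_aG, coe_bG, coe_cG, mul_inv_rev, inv_inv,
    aE_inv, bE_inv, cE_inv, Equiv.Perm.mul_apply, Equiv.Perm.one_apply,
    aE_app, bE_app, cE_app, aF_f, aF_t, bF_f, bF_t, cF_f, cF_t] at h2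
  simp at h2

theorem n_w2 : ¬ wG ^ 2 = 1 := by
  intro h
  have h2 := congrArg (fun g : ↥IMG =>
    (g : Equiv.Perm (List Bool)) [true, false, false, false, false, false]) h
  simp only [pow_two, wG, tG, xG, yG, commutatorElement_def, MulMemClass.coe_mul,
    InvMemClass.coe_inv, OneMemClass.coe_one, coe_aG, coe_bG, coe_cG, mul_inv_rev, inv_inv,
    aE_inv, bE_inv, cE_inv, Equiv.Perm.mul_apply, Equiv.Perm.one_apply,
    aE_app, bE_app, cE_app, aF_f, aF_t, bF_f, bF_t, cF_f, cF_t] at h2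
  simp at h2

theorem order_four {g : ↥IMG} (h4 : g ^ 4 = 1) (h2 : ¬ g ^ 2 = 1) : orderOf g = 4 := by
  haveI : Fact (Nat.Prime 2) := ⟨Nat.prime_two⟩
  have := orderOf_eq_prime_pow (x := g) (p := 2) (n := 1)
    (by norm_num; exact h2) (by norm_num; exact h4)
  simpa using this

theorem ord_x : orderOf xG = 4 := order_four o_x4 n_x2
theorem ord_y : orderOf yG = 4 := order_four o_y4 n_y2
theorem ord_z : orderOf zG = 4 := order_four o_z4 n_z2
theorem ord_t : orderOf tG = 4 := order_four o_t4 n_t2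
theorem ord_w : orderOf wG = 4 := order_four o_w4 n_w2
/-- The five generators of `K`. -/
def Sset : Set ↥IMG := {xG, yG, zG, tG, wG}

/-- The subgroup generated by the five generators. -/
def Hsub : Subgroup ↥IMG := Subgroup.closure Sset

theorem hxH : xG ∈ Hsub := Subgroup.subset_closure (by simp [Sset])
theorem hyH : yG ∈ Hsub := Subgroup.subset_closure (by simp [Sset])
theorem hzH : zG ∈ Hsub := Subgroup.subset_closure (by simp [Sset])
theorem htH : tG ∈ Hsub := Subgroup.subset_closure (by simp [Sset])
theorem hwH : wG ∈ Hsub := Subgroup.subset_closure (by simp [Sset])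

theorem conjH (g : ↥IMG) (hgen : ∀ u ∈ Sset, g * u * g⁻¹ ∈ Hsub) :
    ∀ n ∈ Hsub, g * n * g⁻¹ ∈ Hsub := by
  intro n hn
  refine Subgroup.closure_induction (p := fun m _ => g * m * g⁻¹ ∈ Hsub) hgen ?_ ?_ ?_ hn
  · simpa using one_mem Hsub
  · intro p q _ _ ihp ihq
    have e : g * (p * q) * g⁻¹ = (g * p * g⁻¹) * (g * q * g⁻¹) := by group
    rw [e]; exact mul_mem ihp ihq
  · intro p _ ihp
    have e : g * p⁻¹ * g⁻¹ = (g * p * g⁻¹)⁻¹ := by group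
    rw [e]; exact inv_mem ihp

theorem conj_a : ∀ n ∈ Hsub, aG * n * aG⁻¹ ∈ Hsub := by
  refine conjH aG ?_
  intro u hu
  rw [inv_a]
  simp only [Sset, Set.mem_insert_iff, Set.mem_singleton_iff] at hu
  rcases hu with rfl | rfl | rfl | rfl | rfl
  · rw [rel_axa]; exact inv_mem hxH
  · exact hzH
  · rw [rel_aza]; exact hyH
  · exact hwH
  · rw [rel_awa]; exact htH

theorem conj_b : ∀ n ∈ Hsub, bG * n * bG⁻¹ ∈ Hsub := by
  refine conjH bG ?_
  intro u hu
  rw [inv_b]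
  simp only [Sset, Set.mem_insert_iff, Set.mem_singleton_iff] at hu
  rcases hu with rfl | rfl | rfl | rfl | rfl
  · rw [rel_bxb]; exact inv_mem hxH
  · rw [rel_byb]; exact inv_mem hyH
  · rw [rel_bzb]; exact mul_mem (mul_mem (inv_mem hxH) (inv_mem hzH)) hxH
  · rw [rel_btb]; exact mul_mem (mul_mem hxH htH) (inv_mem hxH)
  · rw [rel_bwb]; exact inv_mem hwH

theorem conj_c : ∀ n ∈ Hsub, cG * n * cG⁻¹ ∈ Hsub := by
  refine conjH cG ?_
  intro u hu
  rw [inv_c]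
  simp only [Sset, Set.mem_insert_iff, Set.mem_singleton_iff] at hu
  rcases hu with rfl | rfl | rfl | rfl | rfl
  · rw [rel_cxc]; exact mul_mem (mul_mem htH hxH) hyH
  · rw [rel_cyc]; exact inv_mem hyH
  · rw [rel_czc]; exact hzH
  · rw [rel_ctc]; exact inv_mem htH
  · rw [rel_cwc]; exact hwH

theorem IMGgen (g : ↥IMG) : g ∈ Subgroup.closure ({aG, bG, cG} : Set ↥IMG) := by
  have h : Subgroup.closure
      ((Subtype.val) ⁻¹' ({aE, bE, cE} : Set (Equiv.Perm (List Bool))) : Set ↥IMG) = ⊤ :=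
    Subgroup.closure_closure_coe_preimage
  have e : ((Subtype.val) ⁻¹' ({aE, bE, cE} : Set (Equiv.Perm (List Bool))) : Set ↥IMG)
      = {aG, bG, cG} := by
    ext u
    simp only [Set.mem_preimage, Set.mem_insert_iff, Set.mem_singleton_iff]
    constructor
    · rintro (hu | hu | hu)
      · exact Or.inl (Subtype.ext hu)
      · exact Or.inr (Or.inl (Subtype.ext hu))
      · exact Or.inr (Or.inr (Subtype.ext hu))
    · rintro (rfl | rfl | rfl)
      · exact Or.inl rfl
      · exact Or.inr (Or.inl rfl)
      · exact Or.inr (Or.inr rfl)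
  rw [e] at h
  rw [h]
  trivial

theorem Hnormal : Hsub.Normal := by
  constructor
  intro n hn g
  have main : ∀ g : ↥IMG, g ∈ Subgroup.closure ({aG, bG, cG} : Set ↥IMG) →
      (∀ n ∈ Hsub, g * n * g⁻¹ ∈ Hsub) ∧ (∀ n ∈ Hsub, g⁻¹ * n * g ∈ Hsub) := by
    intro g hg
    refine Subgroup.closure_induction ?_ ?_ ?_ ?_ hg
    · intro u hu
      rcases hu with rfl | rfl | rfl
      · exact ⟨conj_a, fun n hn => by rw [inv_a]; have := conj_a n hn; rwa [inv_a] at this⟩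
      · exact ⟨conj_b, fun n hn => by rw [inv_b]; have := conj_b n hn; rwa [inv_b] at this⟩
      · exact ⟨conj_c, fun n hn => by rw [inv_c]; have := conj_c n hn; rwa [inv_c] at this⟩
    · exact ⟨fun n hn => by simpa using hn, fun n hn => by simpa using hn⟩
    · intro p q _ _ ihp ihq
      refine ⟨fun n hn => ?_, fun n hn => ?_⟩
      · have e : (p * q) * n * (p * q)⁻¹ = p * (q * n * q⁻¹) * p⁻¹ := by group
        rw [e]; exact ihp.1 _ (ihq.1 n hn)
      · have e : (p * q)⁻¹ * n * (p * q) = q⁻¹ * (p⁻¹ * n * p) * q := by group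
        rw [e]; exact ihq.2 _ (ihp.2 n hn)
    · intro p _ ihp
      refine ⟨fun n hn => ?_, fun n hn => ?_⟩
      · have e : p⁻¹ * n * p⁻¹⁻¹ = p⁻¹ * n * p := by group
        rw [e]; exact ihp.2 n hn
      · have e : p⁻¹⁻¹ * n * p⁻¹ = p * n * p⁻¹ := by group
        rw [e]; exact ihp.1 n hn
  exact (main g (IMGgen g)).1 n hn

instance KsubNormal : Ksub.Normal := Subgroup.normalClosure_normal

theorem kx : xG ∈ Ksub := Subgroup.subset_normalClosure (Or.inl rfl)
theorem ky : yG ∈ Ksub := Subgroup.subset_normalClosure (Or.inr rfl)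

theorem kz : zG ∈ Ksub := by
  have h : aG * yG * aG⁻¹ ∈ Ksub := Subgroup.Normal.conj_mem inferInstance yG ky aG
  rwa [inv_a] at h

theorem kt : tG ∈ Ksub := by
  have h : cG * xG * cG⁻¹ ∈ Ksub := Subgroup.Normal.conj_mem inferInstance xG kx cG
  have e : tG = cG * xG * cG⁻¹ * yG⁻¹ * xG⁻¹ := by rw [inv_c]; rfl
  rw [e]
  exact mul_mem (mul_mem h (inv_mem ky)) (inv_mem kx)

theorem kw : wG ∈ Ksub := by
  have h : aG * tG * aG⁻¹ ∈ Ksub := Subgroup.Normal.conj_mem inferInstance tG kt aG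
  rwa [inv_a] at h

theorem KsubH : Ksub = Hsub := by
  haveI := Hnormal
  refine le_antisymm ?_ ?_
  · refine Subgroup.normalClosure_le_normal ?_
    rintro u (rfl | rfl)
    · exact hxH
    · exact hyH
  · rw [Hsub, Subgroup.closure_le]
    rintro u hu
    simp only [Sset, Set.mem_insert_iff, Set.mem_singleton_iff] at hu
    rcases hu with rfl | rfl | rfl | rfl | rfl
    · exact kx
    · exact ky
    · exact kz
    · exact kt
    · exact kw
def kxK : ↥Ksub := ⟨xG, kx⟩
def kyK : ↥Ksub := ⟨yG, ky⟩
def kzK : ↥Ksub := ⟨zG, kz⟩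
def ktK : ↥Ksub := ⟨tG, kt⟩
def kwK : ↥Ksub := ⟨wG, kw⟩

/-- The five generators inside `K`. -/
def Tset : Set ↥Ksub := {kxK, kyK, kzK, ktK, kwK}

theorem Ttop : Subgroup.closure Tset = ⊤ := by
  rw [eq_top_iff]
  rintro ⟨g, hg⟩ -
  have hg' : g ∈ Hsub := KsubH ▸ hg
  refine Subgroup.closure_induction
    (p := fun m _ => ∀ (hK : m ∈ Ksub), (⟨m, hK⟩ : ↥Ksub) ∈ Subgroup.closure Tset)
    ?_ ?_ ?_ ?_ hg' hg
  · intro u hu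
    simp only [Sset, Set.mem_insert_iff, Set.mem_singleton_iff] at hu
    rcases hu with rfl | rfl | rfl | rfl | rfl <;> intro hK
    · exact Subgroup.subset_closure (Or.inl rfl)
    · exact Subgroup.subset_closure (Or.inr (Or.inl rfl))
    · exact Subgroup.subset_closure (Or.inr (Or.inr (Or.inl rfl)))
    · exact Subgroup.subset_closure (Or.inr (Or.inr (Or.inr (Or.inl rfl))))
    · exact Subgroup.subset_closure (Or.inr (Or.inr (Or.inr (Or.inr rfl))))
  · intro hK
    exact (show ((⟨1, hK⟩ : ↥Ksub)) = 1 from rfl) ▸ one_mem _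
  · intro p q hp hq ihp ihq hK
    have hpK : p ∈ Ksub := KsubH.symm ▸ hp
    have hqK : q ∈ Ksub := KsubH.symm ▸ hq
    exact (show ((⟨p * q, hK⟩ : ↥Ksub)) = ⟨p, hpK⟩ * ⟨q, hqK⟩ from rfl) ▸
      mul_mem (ihp hpK) (ihq hqK)
  · intro p hp ihp hK
    have hpK : p ∈ Ksub := KsubH.symm ▸ hp
    exact (show ((⟨p⁻¹, hK⟩ : ↥Ksub)) = (⟨p, hpK⟩ : ↥Ksub)⁻¹ from rfl) ▸ inv_mem (ihp hpK)

theorem kx4 : kxK ^ 4 = 1 := Subtype.ext (by rw [SubmonoidClass.coe_pow]; exact o_x4)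
theorem ky4 : kyK ^ 4 = 1 := Subtype.ext (by rw [SubmonoidClass.coe_pow]; exact o_y4)
theorem kz4 : kzK ^ 4 = 1 := Subtype.ext (by rw [SubmonoidClass.coe_pow]; exact o_z4)
theorem kt4 : ktK ^ 4 = 1 := Subtype.ext (by rw [SubmonoidClass.coe_pow]; exact o_t4)
theorem kw4 : kwK ^ 4 = 1 := Subtype.ext (by rw [SubmonoidClass.coe_pow]; exact o_w4)

/-- Generators as a `Fin 5`-tuple. -/
def uu : Fin 5 → ↥Ksub := ![kxK, kyK, kzK, ktK, kwK]

theorem hu4 : ∀ i, uu i ^ 4 = 1 := by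
  intro i
  fin_cases i
  · exact kx4
  · exact ky4
  · exact kz4
  · exact kt4
  · exact kw4

/-- Images of the generators in the abelianization. -/
noncomputable def vv : Fin 5 → Abelianization ↥Ksub := fun i => Abelianization.of (uu i)

theorem hv4 : ∀ i, vv i ^ 4 = 1 := fun i => by
  rw [vv, ← map_pow, hu4 i, map_one]

noncomputable def Psi : Fin 5 → (Multiplicative (ZMod 4) →* Abelianization ↥Ksub) :=
  fun i => AddMonoidHom.toMultiplicativeLeft
    (ZMod.lift 4 ⟨zmultiplesHom _ (Additive.ofMul (vv i)),
      by rw [zmultiplesHom_apply, ← ofMul_zpow, zpow_natCast, hv4 i]; rfl⟩)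

theorem Psi_ofAdd (i : Fin 5) : Psi i (Multiplicative.ofAdd (1 : ZMod 4)) = vv i := by
  have h1 : ((1 : ℤ) : ZMod 4) = (1 : ZMod 4) := Int.cast_one
  rw [Psi, AddMonoidHom.coe_toMultiplicativeLeft]
  show Additive.toMul
    ((ZMod.lift 4 _) (Multiplicative.toAdd (Multiplicative.ofAdd (1 : ZMod 4)))) = vv i
  rw [toAdd_ofAdd, ← h1, ZMod.lift_coe]
  show Additive.toMul ((1 : ℤ) • Additive.ofMul (vv i)) = vv i
  rw [one_zsmul]
  rfl

noncomputable def phi : (Fin 5 → Multiplicative (ZMod 4)) →* Abelianization ↥Ksub :=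
  ∏ i : Fin 5, (Psi i).comp (Pi.evalMonoidHom (fun _ : Fin 5 => Multiplicative (ZMod 4)) i)

theorem phi_single (i : Fin 5) :
    phi (Pi.mulSingle i (Multiplicative.ofAdd (1 : ZMod 4))) = vv i := by
  rw [phi, MonoidHom.finset_prod_apply]
  rw [Fintype.prod_eq_single i (fun j hj => ?_)]
  · simp only [MonoidHom.comp_apply, Pi.evalMonoidHom_apply, Pi.mulSingle_eq_same]
    exact Psi_ofAdd i
  · simp only [MonoidHom.comp_apply, Pi.evalMonoidHom_apply]
    rw [Pi.mulSingle_eq_of_ne hj, map_one]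

theorem phi_surjective : Function.Surjective phi := by
  rw [← MonoidHom.range_eq_top]
  rw [eq_top_iff]
  rintro α -
  obtain ⟨k, rfl⟩ := QuotientGroup.mk_surjective α
  have hk : k ∈ Subgroup.closure Tset := Ttop ▸ Subgroup.mem_top k
  refine Subgroup.closure_induction
    (p := fun m _ => Abelianization.of m ∈ phi.range) ?_ ?_ ?_ ?_ hk
  · intro u hu
    rcases hu with rfl | rfl | rfl | rfl | rfl
    · exact ⟨Pi.mulSingle 0 (Multiplicative.ofAdd (1 : ZMod 4)), phi_single 0⟩
    · exact ⟨Pi.mulSingle 1 (Multiplicative.ofAdd (1 : ZMod 4)), phi_single 1⟩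
    · exact ⟨Pi.mulSingle 2 (Multiplicative.ofAdd (1 : ZMod 4)), phi_single 2⟩
    · exact ⟨Pi.mulSingle 3 (Multiplicative.ofAdd (1 : ZMod 4)), phi_single 3⟩
    · exact ⟨Pi.mulSingle 4 (Multiplicative.ofAdd (1 : ZMod 4)), phi_single 4⟩
  · show Abelianization.of (1 : ↥Ksub) ∈ phi.range
    rw [map_one]; exact one_mem _
  · intro p q _ _ ihp ihq
    show Abelianization.of (p * q) ∈ phi.range
    rw [map_mul]; exact mul_mem ihp ihq
  · intro p _ ihp
    show Abelianization.of p⁻¹ ∈ phi.range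
    rw [map_inv]; exact inv_mem ihp

/-- A finite abelian quotient embeds back: duality argument. -/
theorem embed_of_surj {A B : Type} [CommGroup A] [CommGroup B] [Finite B]
    (φ : B →* A) (hφ : Function.Surjective φ) : ∃ f : A →* B, Function.Injective f := by
  have hA : Finite A := Finite.of_surjective φ hφ
  obtain ⟨eA⟩ := CommGroup.monoidHom_mulEquiv_of_hasEnoughRootsOfUnity A ℂ
  obtain ⟨eB⟩ := CommGroup.monoidHom_mulEquiv_of_hasEnoughRootsOfUnity B ℂ
  let dual : (A →* ℂˣ) →* (B →* ℂˣ) :=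
    { toFun := fun ψ => ψ.comp φ
      map_one' := by ext b; simp
      map_mul' := fun ψ χ => by ext b; simp }
  have hd : Function.Injective dual := by
    intro ψ χ h
    ext a
    obtain ⟨b, rfl⟩ := hφ a
    exact congrArg Units.val (DFunLike.congr_fun h b)
  refine ⟨(eB.toMonoidHom.comp dual).comp eA.symm.toMonoidHom, ?_⟩
  intro u v huv
  simp only [MonoidHom.comp_apply, MulEquiv.coe_toMonoidHom] at huv
  exact eA.symm.injective (hd (eB.injective huv))
/-- Each of the five generators `x, y, z, t, w` of the branching subgroup
`K` of `IMG(z²+i)` has order exactly `4`; consequently the abelianization `K/K'`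
embeds into `C₄⁵`. -/
theorem stmt_12 :
    (orderOf xG = 4 ∧ orderOf yG = 4 ∧ orderOf zG = 4 ∧ orderOf tG = 4 ∧ orderOf wG = 4) ∧
    ∃ f : Abelianization ↥Ksub →* (Fin 5 → Multiplicative (ZMod 4)),
      Function.Injective f := by
  refine ⟨⟨ord_x, ord_y, ord_z, ord_t, ord_w⟩, ?_⟩
  exact embed_of_surj phi phi_surjective
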